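/- Let p : ℝ → ℝ be a polynomial of degree at most r with p(0) = 0 and |p(i)| ≤ 2 for i = 1, …, N (r ≤ N), and write p(x) = Σ_{i=1}^r α_i · C(x, i) where C(x,i) = x(x−1)⋯(x−i+1)/i! is the generalized binomial coefficient. Then |α_i| ≤ 2 r^r for every i. -/

import Mathlib

/-- The generalized binomial coefficient C(x, i) = x(x−1)⋯(x−i+1)/i!. -/
noncomputable def genBinom (x : ℝ) (i : ℕ) : ℝ :=
  (∏ j ∈ Finset.range i, (x - j)) / (Nat.factorial i)

lemma genBinom_nat (n k : ℕ) : genBinom (n : ℝ) k = (n.choose k : ℝ) := by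
  unfold genBinom
  have hprod : (∏ j ∈ Finset.range k, ((n : ℝ) - j)) = (n.descFactorial k : ℝ) := by
    rcases le_or_gt k n with h | h
    · rw [Nat.descFactorial_eq_prod_range, Nat.cast_prod]
      refine Finset.prod_congr rfl fun j hj => ?_
      rw [Finset.mem_range] at hj
      rw [Nat.cast_sub (by omega)]
    · rw [Finset.prod_eq_zero (Finset.mem_range.mpr h) (by simp),
        Nat.descFactorial_eq_zero_iff_lt.mpr h, Nat.cast_zero]
  rw [hprod, Nat.descFactorial_eq_factorial_mul_choose, Nat.cast_mul, mul_comm,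
    mul_div_assoc, div_self (Nat.cast_ne_zero.mpr k.factorial_ne_zero), mul_one]

lemma key_ident (i k : ℕ) :
    ∑ j ∈ Finset.range (i+1), (-1:ℝ)^(i+j) * (i.choose j) * (j.choose k)
      = if k = i then 1 else 0 := by
  rcases lt_or_ge i k with h | h
  · rw [if_neg (by omega)]
    apply Finset.sum_eq_zero
    intro j hj
    rw [Finset.mem_range] at hj
    rw [Nat.choose_eq_zero_of_lt (show j < k by omega)]
    simp
  · have h1 : ∑ j ∈ Finset.range (i+1), (-1:ℝ)^(i+j) * (i.choose j) * (j.choose k)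
        = ∑ j ∈ Finset.Ico k (i+1), (-1:ℝ)^(i+j) * (i.choose j) * (j.choose k) := by
      rw [Finset.range_eq_Ico, ← Finset.sum_Ico_consecutive _ (Nat.zero_le k) (by omega)]
      have hz : ∑ j ∈ Finset.Ico 0 k, (-1:ℝ)^(i+j) * (i.choose j) * (j.choose k) = 0 := by
        apply Finset.sum_eq_zero
        intro j hj
        rw [Finset.mem_Ico] at hj
        rw [Nat.choose_eq_zero_of_lt (show j < k from hj.2)]; simp
      rw [hz, zero_add]
    rw [h1, Finset.sum_Ico_eq_sum_range]
    have h2 : ∀ m ∈ Finset.range (i+1-k),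
        (-1:ℝ)^(i+(k+m)) * (i.choose (k+m)) * ((k+m).choose k)
        = ((-1:ℝ)^(i+k) * (i.choose k)) * ((-1:ℝ)^m * ((i-k).choose m)) := by
      intro m hm
      rw [Finset.mem_range] at hm
      have hc := Nat.choose_mul (n := i) (Nat.le_add_right k m)
      rw [show (k + m) - k = m by omega] at hc
      have hcast : ((i.choose (k+m) : ℝ)) * (((k+m).choose k : ℝ))
          = (i.choose k : ℝ) * (((i-k).choose m : ℝ)) := by exact_mod_cast hc
      calc (-1:ℝ)^(i+(k+m)) * (i.choose (k+m)) * ((k+m).choose k)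
          = (-1:ℝ)^(i+k) * (-1:ℝ)^m * ((i.choose (k+m) : ℝ) * ((k+m).choose k)) := by
            rw [← add_assoc, pow_add ((-1:ℝ)) (i+k) m]; ring
        _ = ((-1:ℝ)^(i+k) * (i.choose k)) * ((-1:ℝ)^m * ((i-k).choose m)) := by
            rw [hcast]; ring
    rw [Finset.sum_congr rfl h2, ← Finset.mul_sum]
    have h3 : ∑ m ∈ Finset.range (i+1-k), (-1:ℝ)^m * ((i-k).choose m)
        = if i - k = 0 then 1 else 0 := by
      have hint := Int.alternating_sum_range_choose (n := i - k)
      have hn : i + 1 - k = (i - k) + 1 := by omega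
      rw [hn]
      have := congrArg (fun z : ℤ => (z : ℝ)) hint
      push_cast at this
      simpa using this
    rw [h3]
    rcases eq_or_ne k i with rfl | hne
    · rw [if_pos (Nat.sub_self k), if_pos rfl, Nat.choose_self, Nat.cast_one, mul_one,
        ← two_mul, pow_mul]
      norm_num
    · rw [if_neg (by omega), mul_zero, if_neg hne]

/-- Let p : ℝ → ℝ be a polynomial of degree at most r with p(0) = 0 and |p(i)| ≤ 2 for
i = 1, …, N (r ≤ N), and write p(x) = Σ_{i=1}^r α_i · C(x, i).
Then |α_i| ≤ 2 r^r for every i. -/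
theorem stmt2 (r N : ℕ) (hr : 1 ≤ r) (hrN : r ≤ N) (p : Polynomial ℝ)
    (hdeg : p.natDegree ≤ r) (h0 : p.eval 0 = 0)
    (hb : ∀ i : ℕ, 1 ≤ i → i ≤ N → |p.eval (i : ℝ)| ≤ 2)
    (α : ℕ → ℝ)
    (hexp : ∀ x : ℝ, p.eval x = ∑ i ∈ Finset.Icc 1 r, α i * genBinom x i) :
    ∀ i ∈ Finset.Icc 1 r, |α i| ≤ 2 * (r : ℝ) ^ r := by
  intro i hi'
  have hi := Finset.mem_Icc.mp hi'
  have hevn : ∀ j : ℕ, p.eval (j : ℝ) = ∑ k ∈ Finset.Icc 1 r, α k * (j.choose k : ℝ) := by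
    intro j
    rw [hexp]
    exact Finset.sum_congr rfl fun k _ => by rw [genBinom_nat]
  have hai : α i = ∑ j ∈ Finset.range (i+1), (-1:ℝ)^(i+j) * (i.choose j) * p.eval (j : ℝ) := by
    symm
    calc ∑ j ∈ Finset.range (i+1), (-1:ℝ)^(i+j) * (i.choose j) * p.eval (j : ℝ)
        = ∑ j ∈ Finset.range (i+1), ∑ k ∈ Finset.Icc 1 r,
            (-1:ℝ)^(i+j) * (i.choose j) * (α k * (j.choose k : ℝ)) := by
          refine Finset.sum_congr rfl fun j _ => ?_
          rw [hevn j, Finset.mul_sum]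
      _ = ∑ k ∈ Finset.Icc 1 r, α k *
            ∑ j ∈ Finset.range (i+1), (-1:ℝ)^(i+j) * (i.choose j) * (j.choose k : ℝ) := by
          rw [Finset.sum_comm]
          refine Finset.sum_congr rfl fun k _ => ?_
          rw [Finset.mul_sum]
          exact Finset.sum_congr rfl fun j _ => by ring
      _ = ∑ k ∈ Finset.Icc 1 r, (if k = i then α k else 0) := by
          refine Finset.sum_congr rfl fun k _ => ?_
          rw [key_ident i k]
          split_ifs <;> simp
      _ = α i := by rw [Finset.sum_ite_eq' (Finset.Icc 1 r) i α, if_pos hi']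
  have hS : ∑ j ∈ Finset.range i, (i.choose (j+1) : ℝ) = 2^i - 1 := by
    have h1 : ∑ j ∈ Finset.range (i+1), (i.choose j : ℝ) = 2^i := by
      exact_mod_cast congrArg (fun n : ℕ => (n : ℝ)) (Nat.sum_range_choose i)
    rw [Finset.sum_range_succ'] at h1
    simp only [Nat.choose_zero_right, Nat.cast_one] at h1
    linarith
  have habs : |α i| ≤ 2 * ((2:ℝ)^i - 1) := by
    rw [hai]
    have hle : |∑ j ∈ Finset.range (i+1), (-1:ℝ)^(i+j) * (i.choose j) * p.eval (j : ℝ)|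
        ≤ ∑ j ∈ Finset.range (i+1), (if j = 0 then (0:ℝ) else 2 * (i.choose j : ℝ)) := by
      refine (Finset.abs_sum_le_sum_abs _ _).trans (Finset.sum_le_sum fun j hj => ?_)
      rw [Finset.mem_range] at hj
      rcases eq_or_ne j 0 with rfl | hj0
      · simp [h0]
      · rw [if_neg hj0, abs_mul, abs_mul]
        rw [show |(-1:ℝ)^(i+j)| = 1 by rw [abs_pow, abs_neg, abs_one, one_pow], one_mul,
          abs_of_nonneg (Nat.cast_nonneg _), mul_comm (2:ℝ)]
        exact mul_le_mul_of_nonneg_left (hb j (by omega) (by omega)) (Nat.cast_nonneg _)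
    refine hle.trans ?_
    rw [Finset.sum_range_succ']
    simp only [Nat.succ_ne_zero, if_false, eq_self_iff_true, if_true, add_zero]
    rw [← Finset.mul_sum, hS]
  have hnat : (2:ℕ)^i ≤ r^r + 1 := by
    by_cases h2 : 2 ≤ r
    · calc (2:ℕ)^i ≤ 2^r := Nat.pow_le_pow_right (by norm_num) hi.2
        _ ≤ r^r := Nat.pow_le_pow_left h2 r
        _ ≤ r^r + 1 := Nat.le_succ _
    · have hr1 : r = 1 := by omega
      have hi1 : i = 1 := by omega
      subst hr1; subst hi1; norm_num
  have hreal : (2:ℝ)^i ≤ (r:ℝ)^r + 1 := by exact_mod_cast hnat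
  linarith
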